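/- There exists a linearly ordered pointed residuated po-monoid (M, ≤, ⊙, t, →, ⇝) with least element ⊥ and greatest element ⊤, and an element a of M, such that it is not the case that t ≤ (a ⇝ t) → (a → t). (That is, there is a linearly ordered HpsUL-algebra that is not an HpsUL*-algebra: the weak commutativity axiom (WCM) is not derivable in HpsUL.) -/
import Mathlib

def T4 : Fin 4 → Fin 4 → Fin 4 := ![![0,0,0,0],![0,1,1,1],![0,1,2,3],![0,3,3,3]]
def I4 : Fin 4 → Fin 4 → Fin 4 := ![![3,3,3,3],![0,3,3,3],![0,1,2,3],![0,0,0,3]]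
def L4 : Fin 4 → Fin 4 → Fin 4 := ![![3,3,3,3],![0,2,2,3],![0,1,2,3],![0,1,1,3]]

theorem wcm_not_derivable :
    ∃ (M : Type) (_ : LinearOrder M) (odot : M → M → M) (t : M)
      (imp limp : M → M → M) (bot top : M),
      (∀ x, bot ≤ x) ∧ (∀ x, x ≤ top) ∧
      (∀ x y z, odot (odot x y) z = odot x (odot y z)) ∧
      (∀ x, odot t x = x) ∧ (∀ x, odot x t = x) ∧
      (∀ x y z, odot x y ≤ z ↔ y ≤ imp x z) ∧
      (∀ x y z, odot x y ≤ z ↔ x ≤ limp y z) ∧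
      ∃ a : M, ¬ t ≤ imp (limp a t) (imp a t) := by
  refine ⟨Fin 4, inferInstance, T4, 2, I4, L4, 0, 3, ?_, ?_, ?_, ?_, ?_, ?_, ?_, 3, ?_⟩ <;> decide
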